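/- Consistency lemma for the eikonal equation (Lemma 3.4). Let v : ℝ^N → ℝ be Lipschitz, let φ : (0,T]×ℝ^N → ℝ be bounded and C¹, and let (t₀,x₀) ∈ (0,T)×ℝ^N. There exists a function o : (0,1)×(0,1) → [0,∞) with o(ε,r) → 0 as (ε,r) → (0,0), depending only on φ, (t₀,x₀) and v, such that for all sufficiently small ε, r > 0 and all (t,x) in the ball B_r(t₀,x₀) there exist points x_P, y_P ∈ E^+(x) and x_C, y_C ∈ E^−(x) with: R^ε[φ](t,x) − φ(t,x) ≤ T_P(x,x_P)·(∂_tφ(t,x) + v_+(x)|D_xφ(t,x)| + o(ε,r)); R^ε[φ](t,x) − φ(t,x) ≥ T_P(x,y_P)·(∂_tφ(t,x) + v_+(x)|D_xφ(t,x)| − o(ε,r)); R_ε[φ](t,x) − φ(t,x) ≤ T_C(x,y_C)·(∂_tφ(t,x) − v_−(x)|D_xφ(t,x)| + o(ε,r)); and R_ε[φ](t,x) − φ(t,x) ≥ T_C(x,x_C)·(∂_tφ(t,x) − v_−(x)|D_xφ(t,x)| − o(ε,r)). -/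

import Mathlib

open MeasureTheory Metric Set Filter Topology RealInnerProductSpace

noncomputable section

attribute [local instance] Classical.propDecidable

/-- ℝ^N. -/
abbrev Euc (N : ℕ) := EuclideanSpace ℝ (Fin N)

/-- The cut-off function `C_ε(r) = (r ∨ ε^{3/2}) ∧ ε^{1/2}`. -/
def cutC (ε r : ℝ) : ℝ := min (max r (ε ^ ((3:ℝ)/2))) (ε ^ ((1:ℝ)/2))

/-- Paul's admissible positions `E^+(x)`. -/
def Eplus {N : ℕ} (v : Euc N → ℝ) (ε : ℝ) (x : Euc N) : Set (Euc N) :=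
  if (ball x ε ∩ {y | 0 < v y}).Nonempty then ball x ε ∩ {y | 0 < v y} else {x}

/-- Carol's admissible positions `E^-(x)`. -/
def Eminus {N : ℕ} (v : Euc N → ℝ) (ε : ℝ) (x : Euc N) : Set (Euc N) :=
  if (ball x ε ∩ {y | v y < 0}).Nonempty then ball x ε ∩ {y | v y < 0} else {x}

/-- Paul's time increment `T_P(x,x')`. -/
def TPe {N : ℕ} (v : Euc N → ℝ) (ε : ℝ) (x x' : Euc N) : ℝ :=
  if (ball x ε ∩ {y | 0 < v y}).Nonempty then cutC ε (ε / max (v x') 0) else ε ^ 2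

/-- Carol's time increment `T_C(x,x')`. -/
def TCe {N : ℕ} (v : Euc N → ℝ) (ε : ℝ) (x x' : Euc N) : ℝ :=
  if (ball x ε ∩ {y | v y < 0}).Nonempty then cutC ε (ε / max (-v x') 0) else ε ^ 2

/-- The operator `R^ε[φ](t,x) = sup_{x_P ∈ E^+(x)} φ(t + T_P(x,x_P), x_P)`. -/
def Rup {N : ℕ} (v : Euc N → ℝ) (ε : ℝ) (φ : ℝ → Euc N → ℝ) (t : ℝ) (x : Euc N) : ℝ :=
  sSup ((fun xP => φ (t + TPe v ε x xP) xP) '' Eplus v ε x)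

/-- The operator `R_ε[φ](t,x) = inf_{x_C ∈ E^-(x)} φ(t + T_C(x,x_C), x_C)`. -/
def Rlo {N : ℕ} (v : Euc N → ℝ) (ε : ℝ) (φ : ℝ → Euc N → ℝ) (t : ℝ) (x : Euc N) : ℝ :=
  sInf ((fun xC => φ (t + TCe v ε x xC) xC) '' Eminus v ε x)

/-- The one-step game operator `S^ε[φ](t,x)` for the eikonal game. -/
def Seik {N : ℕ} (v : Euc N → ℝ) (ε : ℝ) (φ : ℝ → Euc N → ℝ) (t : ℝ) (x : Euc N) : ℝ :=
  sSup ((fun xP =>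
      sInf ((fun xC => φ (t + TPe v ε x xP + TCe v ε xP xC) xC) '' Eminus v ε xP)) ''
    Eplus v ε x)

/-- Viscosity subsolution of `−∂_t u − v(x)|Du| = 0` on `(0,T)×ℝ^N`. -/
def EikSubsol {N : ℕ} (v : Euc N → ℝ) (T : ℝ) (u : ℝ → Euc N → ℝ) : Prop :=
  UpperSemicontinuousOn (fun p : ℝ × Euc N => u p.1 p.2) (Ioo (0:ℝ) T ×ˢ univ) ∧
  ∀ φ : ℝ → Euc N → ℝ, ContDiff ℝ 2 (fun p : ℝ × Euc N => φ p.1 p.2) →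
    ∀ t ∈ Ioo (0:ℝ) T, ∀ x : Euc N,
      (∃ δ > (0:ℝ), ∀ s ∈ Ioo (0:ℝ) T, ∀ y : Euc N, |s - t| < δ → dist y x < δ →
        u s y - φ s y ≤ u t x - φ t x) →
      -(deriv (fun s => φ s x) t) - v x * ‖gradient (φ t) x‖ ≤ 0

/-- Viscosity supersolution of `−∂_t u − v(x)|Du| = 0` on `(0,T)×ℝ^N`. -/
def EikSupersol {N : ℕ} (v : Euc N → ℝ) (T : ℝ) (u : ℝ → Euc N → ℝ) : Prop :=
  LowerSemicontinuousOn (fun p : ℝ × Euc N => u p.1 p.2) (Ioo (0:ℝ) T ×ˢ univ) ∧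
  ∀ φ : ℝ → Euc N → ℝ, ContDiff ℝ 2 (fun p : ℝ × Euc N => φ p.1 p.2) →
    ∀ t ∈ Ioo (0:ℝ) T, ∀ x : Euc N,
      (∃ δ > (0:ℝ), ∀ s ∈ Ioo (0:ℝ) T, ∀ y : Euc N, |s - t| < δ → dist y x < δ →
        u t x - φ t x ≤ u s y - φ s y) →
      0 ≤ -(deriv (fun s => φ s x) t) - v x * ‖gradient (φ t) x‖

/-- Upper relaxed semi-limit `limsup* u^ε`. -/
def relaxSup {N : ℕ} (u : ℝ → ℝ → Euc N → ℝ) (t : ℝ) (x : Euc N) : ℝ :=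
  sInf {a | ∃ δ > (0:ℝ), a = sSup ((fun q : ℝ × ℝ × Euc N => u q.1 q.2.1 q.2.2) ''
    {q | 0 < q.1 ∧ q.1 < δ ∧ |q.2.1 - t| < δ ∧ dist q.2.2 x < δ})}

/-- Lower relaxed semi-limit `liminf* u^ε`. -/
def relaxInf {N : ℕ} (u : ℝ → ℝ → Euc N → ℝ) (t : ℝ) (x : Euc N) : ℝ :=
  sSup {a | ∃ δ > (0:ℝ), a = sInf ((fun q : ℝ × ℝ × Euc N => u q.1 q.2.1 q.2.2) ''
    {q | 0 < q.1 ∧ q.1 < δ ∧ |q.2.1 - t| < δ ∧ dist q.2.2 x < δ})}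


set_option maxHeartbeats 1000000

section cutClems
variable {ε : ℝ}
lemma sq_mul_sq (hε : 0 ≤ ε) : ε ^ ((1:ℝ)/2) * ε ^ ((1:ℝ)/2) = ε := by
  rw [← Real.rpow_add' hε (by norm_num)]; norm_num
lemma cb_eq (hε : 0 ≤ ε) : ε ^ ((3:ℝ)/2) = ε * ε ^ ((1:ℝ)/2) := by
  rw [← Real.rpow_one_add' hε (by norm_num)]; norm_num
lemma cb_le_sq (hε : 0 < ε) (hε1 : ε ≤ 1) : ε ^ ((3:ℝ)/2) ≤ ε ^ ((1:ℝ)/2) :=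
  Real.rpow_le_rpow_of_exponent_ge hε hε1 (by norm_num)
lemma sq_pos (hε : 0 < ε) : 0 < ε ^ ((1:ℝ)/2) := Real.rpow_pos_of_pos hε _
lemma cb_pos (hε : 0 < ε) : 0 < ε ^ ((3:ℝ)/2) := Real.rpow_pos_of_pos hε _
lemma eps_le_sq (hε : 0 < ε) (hε1 : ε ≤ 1) : ε ≤ ε ^ ((1:ℝ)/2) := by
  nth_rewrite 1 [show ε = ε ^ (1:ℝ) by rw [Real.rpow_one]]
  exact Real.rpow_le_rpow_of_exponent_ge hε hε1 (by norm_num)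
lemma sq_le_q (hε : 0 < ε) (hε1 : ε ≤ 1) : ε ^ ((1:ℝ)/2) ≤ ε ^ ((1:ℝ)/4) :=
  Real.rpow_le_rpow_of_exponent_ge hε hε1 (by norm_num)
lemma sqeps_le_cb (hε : 0 < ε) (hε1 : ε ≤ 1) : ε ^ 2 ≤ ε ^ ((3:ℝ)/2) := by
  rw [show (ε:ℝ) ^ 2 = ε ^ ((2:ℕ):ℝ) by rw [Real.rpow_natCast]]
  exact Real.rpow_le_rpow_of_exponent_ge hε hε1 (by norm_num)
lemma cb_mul_sq (hε : 0 ≤ ε) : ε ^ ((3:ℝ)/2) * ε ^ ((1:ℝ)/2) = ε ^ 2 := by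
  rw [← Real.rpow_add' hε (by norm_num),
    show (3:ℝ)/2 + 1/2 = ((2:ℕ):ℝ) by norm_num, Real.rpow_natCast]
lemma q_mul_q (hε : 0 ≤ ε) : ε ^ ((1:ℝ)/4) * ε ^ ((1:ℝ)/4) = ε ^ ((1:ℝ)/2) := by
  rw [← Real.rpow_add' hε (by norm_num)]; norm_num
lemma cutC_le_sq {r : ℝ} : cutC ε r ≤ ε ^ ((1:ℝ)/2) := min_le_right _ _
lemma cb_le_cutC {r : ℝ} (hε : 0 < ε) (hε1 : ε ≤ 1) : ε ^ ((3:ℝ)/2) ≤ cutC ε r :=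
  le_min (le_max_right _ _) (cb_le_sq hε hε1)
lemma cutC_pos {r : ℝ} (hε : 0 < ε) (hε1 : ε ≤ 1) : 0 < cutC ε r :=
  lt_of_lt_of_le (cb_pos hε) (cb_le_cutC hε hε1)
lemma lemA {w V Lr : ℝ} (hε : 0 < ε) (hw : 0 < w) (hV : 0 ≤ V) (hLr : 0 ≤ Lr)
    (hwV : w ≤ V + Lr) : ε ≤ cutC ε (ε / w) * (V + Lr + ε ^ ((1:ℝ)/2)) := by
  have hsq := sq_pos hε
  have hsq2 := sq_mul_sq hε.le
  unfold cutC
  rcases le_total (ε ^ ((1:ℝ)/2)) (max (ε / w) (ε ^ ((3:ℝ)/2))) with h | h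
  · rw [min_eq_right h]
    nlinarith [hsq.le]
  · rw [min_eq_left h]
    have h1 : ε / w ≤ max (ε / w) (ε ^ ((3:ℝ)/2)) := le_max_left _ _
    have h2 : ε / w * w = ε := div_mul_cancel₀ _ hw.ne'
    nlinarith [div_pos hε hw]
lemma cutC_le_max {r : ℝ} : cutC ε r ≤ max r (ε ^ ((3:ℝ)/2)) := min_le_left _ _
end cutClems


lemma negset {N : ℕ} (v : Euc N → ℝ) : {y : Euc N | 0 < -v y} = {y | v y < 0} := by
  ext y; simp [neg_pos]

lemma Eplus_neg {N : ℕ} (v : Euc N → ℝ) (ε : ℝ) (x : Euc N) :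
    Eplus (fun y => -v y) ε x = Eminus v ε x := by
  unfold Eplus Eminus; rw [negset]

lemma TPe_neg {N : ℕ} (v : Euc N → ℝ) (ε : ℝ) (x x' : Euc N) :
    TPe (fun y => -v y) ε x x' = TCe v ε x x' := by
  unfold TPe TCe; rw [negset]

lemma Rup_neg {N : ℕ} (v : Euc N → ℝ) (ε : ℝ) (x : Euc N) (φ : ℝ → Euc N → ℝ) (t : ℝ) :
    Rup (fun y => -v y) ε (fun s y => -(φ s y)) t x = - Rlo v ε φ t x := by
  unfold Rup Rlo
  rw [Real.sInf_def, neg_neg]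
  congr 1
  ext b
  simp only [Set.mem_image, Set.mem_neg, Eplus_neg, TPe_neg]
  constructor
  · rintro ⟨y, hy, hb⟩; exact ⟨y, hy, by rw [← hb]; ring⟩
  · rintro ⟨y, hy, hb⟩; exact ⟨y, hy, by rw [show b = -(-b) by ring, hb]⟩

lemma gradient_neg' {N : ℕ} (x : Euc N) {f : Euc N → ℝ} :
    gradient (fun y => -(f y)) x = - gradient f x := by
  unfold gradient; rw [fderiv_fun_neg, map_neg]

lemma TPe_nonneg {N : ℕ} (v : Euc N → ℝ) {ε : ℝ} (hε : 0 ≤ ε) (x x' : Euc N) :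
    0 ≤ TPe v ε x x' := by
  unfold TPe
  split
  · exact le_min (le_max_of_le_right (Real.rpow_nonneg hε _)) (Real.rpow_nonneg hε _)
  · positivity

lemma TCe_nonneg {N : ℕ} (v : Euc N → ℝ) {ε : ℝ} (hε : 0 ≤ ε) (x x' : Euc N) :
    0 ≤ TCe v ε x x' := by
  unfold TCe
  split
  · exact le_min (le_max_of_le_right (Real.rpow_nonneg hε _)) (Real.rpow_nonneg hε _)
  · positivity


lemma convert4 {N : ℕ} {v : Euc N → ℝ} {ε : ℝ} {φ : ℝ → Euc N → ℝ} {t η : ℝ} {x : Euc N}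
    (h : ∃ xC ∈ Eplus (fun y => -v y) ε x,
      Rup (fun y => -v y) ε (fun s y => -(φ s y)) t x - -(φ t x) ≤
        TPe (fun y => -v y) ε x xC *
          (deriv (fun s => -(φ s x)) t + max (-v x) 0 * ‖gradient (fun y => -(φ t y)) x‖ + η)) :
    ∃ xC ∈ Eminus v ε x, Rlo v ε φ t x - φ t x ≥ TCe v ε x xC *
      (deriv (fun s => φ s x) t - max (-v x) 0 * ‖gradient (φ t) x‖ - η) := by
  obtain ⟨xC, hm, hle⟩ := h
  rw [Eplus_neg] at hm
  rw [TPe_neg, Rup_neg, deriv.fun_neg, gradient_neg', norm_neg] at hle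
  refine ⟨xC, hm, ?_⟩
  rw [ge_iff_le]
  have he : TCe v ε x xC * (deriv (fun s => φ s x) t - max (-v x) 0 * ‖gradient (φ t) x‖ - η)
      = -(TCe v ε x xC *
        (-deriv (fun s => φ s x) t + max (-v x) 0 * ‖gradient (φ t) x‖ + η)) := by ring
  rw [he]
  linarith only [hle]

lemma convert3 {N : ℕ} {v : Euc N → ℝ} {ε : ℝ} {φ : ℝ → Euc N → ℝ} {t η : ℝ} {x : Euc N}
    (h : ∃ yC ∈ Eplus (fun y => -v y) ε x,
      Rup (fun y => -v y) ε (fun s y => -(φ s y)) t x - -(φ t x) ≥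
        TPe (fun y => -v y) ε x yC *
          (deriv (fun s => -(φ s x)) t + max (-v x) 0 * ‖gradient (fun y => -(φ t y)) x‖ - η)) :
    ∃ yC ∈ Eminus v ε x, Rlo v ε φ t x - φ t x ≤ TCe v ε x yC *
      (deriv (fun s => φ s x) t - max (-v x) 0 * ‖gradient (φ t) x‖ + η) := by
  obtain ⟨yC, hm, hle⟩ := h
  rw [Eplus_neg] at hm
  rw [ge_iff_le, TPe_neg, Rup_neg, deriv.fun_neg, gradient_neg', norm_neg] at hle
  refine ⟨yC, hm, ?_⟩
  have he : TCe v ε x yC * (deriv (fun s => φ s x) t - max (-v x) 0 * ‖gradient (φ t) x‖ + η)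
      = -(TCe v ε x yC *
        (-deriv (fun s => φ s x) t + max (-v x) 0 * ‖gradient (φ t) x‖ - η)) := by ring
  rw [he]
  linarith only [hle]

lemma core {N : ℕ} {T : ℝ} {v : Euc N → ℝ} {L : NNReal} (hv : LipschitzWith L v)
    {φ : ℝ → Euc N → ℝ}
    (hφ : ContDiffOn ℝ 1 (fun p : ℝ × Euc N => φ p.1 p.2) (Ioc (0:ℝ) T ×ˢ univ))
    {M : ℝ} (hφb : ∀ t ∈ Ioc (0:ℝ) T, ∀ x, |φ t x| ≤ M)
    {t₀ : ℝ} (x₀ : Euc N) (ht₀ : t₀ ∈ Ioo (0:ℝ) T) {η : ℝ} (hη : 0 < η) :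
    ∃ ε₀ > (0:ℝ), ∃ r₀ > (0:ℝ), ∀ ε ∈ Ioo (0:ℝ) ε₀, ∀ r ∈ Ioo (0:ℝ) r₀,
      ∀ (t : ℝ) (x : Euc N), dist (t, x) (t₀, x₀) < r →
        (∃ xP ∈ Eplus v ε x, Rup v ε φ t x - φ t x ≤ TPe v ε x xP *
            (deriv (fun s => φ s x) t + max (v x) 0 * ‖gradient (φ t) x‖ + η)) ∧
        (∃ yP ∈ Eplus v ε x, Rup v ε φ t x - φ t x ≥ TPe v ε x yP *
            (deriv (fun s => φ s x) t + max (v x) 0 * ‖gradient (φ t) x‖ - η)) := by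
  obtain ⟨ht₀0, ht₀T⟩ := ht₀
  have hUopen : IsOpen (Ioo (0:ℝ) T ×ˢ (univ : Set (Euc N))) := isOpen_Ioo.prod isOpen_univ
  have hψU : ContDiffOn ℝ 1 (fun p : ℝ × Euc N => φ p.1 p.2) (Ioo (0:ℝ) T ×ˢ univ) :=
    hφ.mono (prod_mono Ioo_subset_Ioc_self subset_rfl)
  have hfd : ∀ p ∈ Ioo (0:ℝ) T ×ˢ (univ : Set (Euc N)),
      DifferentiableAt ℝ (fun p : ℝ × Euc N => φ p.1 p.2) p := fun p hp =>
    ((hψU.differentiableOn one_ne_zero) p hp).differentiableAt (hUopen.mem_nhds hp)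
  have hcont : ContinuousOn (fderiv ℝ (fun p : ℝ × Euc N => φ p.1 p.2))
      (Ioo (0:ℝ) T ×ˢ univ) := hψU.continuousOn_fderiv_of_isOpen hUopen le_rfl
  have h₀U : ((t₀, x₀) : ℝ × Euc N) ∈ Ioo (0:ℝ) T ×ˢ (univ : Set (Euc N)) :=
    ⟨⟨ht₀0, ht₀T⟩, mem_univ _⟩
  set D₀ := fderiv ℝ (fun p : ℝ × Euc N => φ p.1 p.2) (t₀, x₀) with hD₀
  set G := ‖D₀‖ + 1 with hGdef
  have hG1 : 1 ≤ G := le_add_of_nonneg_left (norm_nonneg _)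
  have hG0 : 0 < G := lt_of_lt_of_le one_pos hG1
  set δs := min t₀ (T - t₀) / 2 with hδs
  have hδs0 : 0 < δs := by
    have : 0 < min t₀ (T - t₀) := lt_min ht₀0 (by linarith)
    positivity
  set Vb := |v x₀| + (L:ℝ) * δs + 2*(L:ℝ) + 2 with hVbdef
  have hL0 : (0:ℝ) ≤ L := L.coe_nonneg
  have hVb1 : 1 ≤ Vb := by
    have h1 := abs_nonneg (v x₀)
    have h2 : 0 ≤ (L:ℝ) * δs := mul_nonneg hL0 hδs0.le
    rw [hVbdef]; linarith
  have hVb0 : 0 < Vb := lt_of_lt_of_le one_pos hVb1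
  obtain ⟨η', hη'0, hη'1, hη'Vb⟩ :
      ∃ η' : ℝ, 0 < η' ∧ η' ≤ 1 ∧ 2 * η' * Vb ≤ η / 3 := by
    refine ⟨min (η / (6 * Vb)) 1, lt_min (by positivity) one_pos, min_le_right _ _, ?_⟩
    have h1 : min (η / (6 * Vb)) 1 ≤ η / (6 * Vb) := min_le_left _ _
    have h2 : 2 * min (η / (6 * Vb)) 1 * Vb ≤ 2 * (η / (6*Vb)) * Vb :=
      mul_le_mul_of_nonneg_right (by linarith) hVb0.le
    have h3 : 2 * (η / (6*Vb)) * Vb = η / 3 := by field_simp; ring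
    linarith
  have hca : ContinuousAt (fderiv ℝ (fun p : ℝ × Euc N => φ p.1 p.2)) (t₀, x₀) :=
    hcont.continuousAt (hUopen.mem_nhds h₀U)
  obtain ⟨δ₂, hδ₂0, hδ₂⟩ := Metric.continuousAt_iff.mp hca η' hη'0
  set δ₁ := min δ₂ δs with hδ₁def
  have hδ₁0 : 0 < δ₁ := lt_min hδ₂0 hδs0
  have hδ₁s : δ₁ ≤ δs := min_le_right _ _
  have hδ₁U : ball ((t₀, x₀) : ℝ × Euc N) δ₁ ⊆ Ioo (0:ℝ) T ×ˢ univ := by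
    intro p hp
    rw [mem_ball, Prod.dist_eq, max_lt_iff] at hp
    have h1 : |p.1 - t₀| < δs := by
      have := lt_of_lt_of_le hp.1 hδ₁s; rwa [Real.dist_eq] at this
    rw [abs_lt] at h1
    have hm1 : min t₀ (T - t₀) ≤ t₀ := min_le_left _ _
    have hm2 : min t₀ (T - t₀) ≤ T - t₀ := min_le_right _ _
    refine ⟨⟨?_, ?_⟩, mem_univ _⟩
    · have := h1.1; simp only [hδs] at this; linarith
    · have := h1.2; simp only [hδs] at this; linarith
  have hDnear : ∀ p ∈ ball ((t₀, x₀) : ℝ × Euc N) δ₁,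
      ‖fderiv ℝ (fun p : ℝ × Euc N => φ p.1 p.2) p - D₀‖ < η' := by
    intro p hp
    have := hδ₂ (lt_of_lt_of_le (mem_ball.mp hp) (min_le_left _ _))
    rwa [dist_eq_norm] at this
  set c0 := min (min (δ₁/4) (η/3))
      (min (min (η/(3*((L:ℝ)+1)*G)) (2*η/(3*((L:ℝ)+3)*G)))
        (min (1/(2*(L:ℝ)+2)) (2*η/(3*(Vb*(2*(L:ℝ)+Vb+1)*G))))) with hc0def
  have hc00 : 0 < c0 := by
    refine lt_min (lt_min (by positivity) (by positivity))
      (lt_min (lt_min (by positivity) (by positivity)) (lt_min (by positivity) (by positivity)))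
  have hcA : c0 ≤ δ₁/4 := le_trans (min_le_left _ _) (min_le_left _ _)
  have hcB : c0 ≤ η/3 := le_trans (min_le_left _ _) (min_le_right _ _)
  have hcC : c0 ≤ η/(3*((L:ℝ)+1)*G) :=
    le_trans (min_le_right _ _) (le_trans (min_le_left _ _) (min_le_left _ _))
  have hcD : c0 ≤ 2*η/(3*((L:ℝ)+3)*G) :=
    le_trans (min_le_right _ _) (le_trans (min_le_left _ _) (min_le_right _ _))
  have hcE : c0 ≤ 1/(2*(L:ℝ)+2) :=
    le_trans (min_le_right _ _) (le_trans (min_le_right _ _) (min_le_left _ _))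
  have hcF : c0 ≤ 2*η/(3*(Vb*(2*(L:ℝ)+Vb+1)*G)) :=
    le_trans (min_le_right _ _) (le_trans (min_le_right _ _) (min_le_right _ _))
  clear_value D₀ G δs Vb δ₁ c0
  refine ⟨min (c0^4) 1, lt_min (by positivity) one_pos, δ₁/4, by positivity, ?_⟩
  rintro ε ⟨hε0, hεlt⟩ r ⟨hr0, hrlt⟩ t x hdist
  have hε1 : ε ≤ 1 := le_of_lt (lt_of_lt_of_le hεlt (min_le_right _ _))
  set sq := ε ^ ((1:ℝ)/2) with hsqdef
  set q := ε ^ ((1:ℝ)/4) with hqdef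
  have hsq0 : 0 < sq := sq_pos hε0
  have hq0 : 0 < q := Real.rpow_pos_of_pos hε0 _
  have hqsq : sq ≤ q := sq_le_q hε0 hε1
  have hεsq : ε ≤ sq := eps_le_sq hε0 hε1
  have hεq : ε ≤ q := le_trans hεsq hqsq
  have hsq1 : sq ≤ 1 := Real.rpow_le_one hε0.le hε1 (by norm_num)
  have hsqsq : sq * sq = ε := sq_mul_sq hε0.le
  have hq : q ≤ c0 := by
    have h1 : ε ≤ c0^4 := le_of_lt (lt_of_lt_of_le hεlt (min_le_left _ _))
    have h2 : ε ^ ((1:ℝ)/4) ≤ (c0^4) ^ ((1:ℝ)/4) :=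
      Real.rpow_le_rpow hε0.le h1 (by norm_num)
    have h3 : (c0^4 : ℝ) ^ ((1:ℝ)/4) = c0 := by
      rw [← Real.rpow_natCast c0 4, ← Real.rpow_mul hc00.le]
      norm_num
    rw [h3] at h2; exact h2
  have hqq : q * q = sq := by rw [hsqdef, hqdef]; exact q_mul_q hε0.le
  have hcbsq : ε ^ ((3:ℝ)/2) * ε ^ ((1:ℝ)/2) = ε ^ 2 := cb_mul_sq hε0.le
  clear_value sq q
  -- geometric containment
  have hdistr : dist t t₀ < δ₁/4 ∧ dist x x₀ < δ₁/4 := by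
    rw [Prod.dist_eq, max_lt_iff] at hdist
    exact ⟨lt_of_lt_of_le hdist.1 (le_of_lt hrlt), lt_of_lt_of_le hdist.2 (le_of_lt hrlt)⟩
  have hsqd : sq + ε ≤ δ₁/2 := by
    have : q + q ≤ δ₁/4 + δ₁/4 := by linarith [le_trans hq hcA]
    linarith
  have hmemB : ∀ T' : ℝ, ∀ y : Euc N, 0 ≤ T' → T' ≤ sq → dist y x ≤ ε →
      ((t + T', y) : ℝ × Euc N) ∈ ball ((t₀, x₀) : ℝ × Euc N) δ₁ := by
    intro T' y h0 h1 h2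
    rw [mem_ball, Prod.dist_eq]
    refine max_lt ?_ ?_
    · have ht1 : dist (t + T') t₀ ≤ dist (t + T') t + dist t t₀ := dist_triangle _ _ _
      have ht2 : dist (t + T') t = T' := by
        rw [Real.dist_eq, add_sub_cancel_left, abs_of_nonneg h0]
      linarith [hdistr.1]
    · have hy1 : dist y x₀ ≤ dist y x + dist x x₀ := dist_triangle _ _ _
      linarith [hdistr.2, hsq0.le, h0]
  have hxB : ((t, x) : ℝ × Euc N) ∈ ball ((t₀, x₀) : ℝ × Euc N) δ₁ := by
    rw [mem_ball, Prod.dist_eq]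
    exact max_lt (by linarith [hdistr.1]) (by linarith [hdistr.2])
  set D := fderiv ℝ (fun p : ℝ × Euc N => φ p.1 p.2) (t, x) with hDdef
  have hDat : HasFDerivAt (fun p : ℝ × Euc N => φ p.1 p.2) D (t, x) :=
    (hfd _ (hδ₁U hxB)).hasFDerivAt
  have hDG : ‖D‖ ≤ G := by
    have h1 := hDnear _ hxB
    have h2 : ‖D‖ ≤ ‖D₀‖ + ‖D - D₀‖ := by
      calc ‖D‖ = ‖D₀ + (D - D₀)‖ := by rw [add_sub_cancel]
      _ ≤ ‖D₀‖ + ‖D - D₀‖ := norm_add_le _ _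
    rw [hGdef]; linarith
  have ha : deriv (fun s => φ s x) t = D ((1:ℝ), (0:Euc N)) := by
    have hcurve : HasDerivAt (fun s : ℝ => ((s, x) : ℝ × Euc N)) ((1:ℝ), (0:Euc N)) t :=
      (hasDerivAt_id t).prodMk (hasDerivAt_const t x)
    exact (hDat.comp_hasDerivAt t hcurve).deriv
  have hFg : HasFDerivAt (φ t)
      (D.comp ((0 : Euc N →L[ℝ] ℝ).prod (ContinuousLinearMap.id ℝ (Euc N)))) x := by
    have hj : HasFDerivAt (fun y : Euc N => ((t, y) : ℝ × Euc N))
        ((0 : Euc N →L[ℝ] ℝ).prod (ContinuousLinearMap.id ℝ (Euc N))) x :=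
      (hasFDerivAt_const t x).prodMk (hasFDerivAt_id x)
    exact hDat.comp x hj
  have hgeq : gradient (φ t) x = (InnerProductSpace.toDual ℝ (Euc N)).symm
      (D.comp ((0 : Euc N →L[ℝ] ℝ).prod (ContinuousLinearMap.id ℝ (Euc N)))) :=
    hFg.hasGradientAt.gradient
  have hg : ∀ u : Euc N, ⟪gradient (φ t) x, u⟫ = D ((0:ℝ), u) := by
    intro u
    rw [hgeq, InnerProductSpace.toDual_symm_apply]
    rfl
  have hgn : ‖gradient (φ t) x‖ ≤ G := by
    rw [hgeq, LinearIsometryEquiv.norm_map]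
    refine le_trans (ContinuousLinearMap.opNorm_le_bound _ (norm_nonneg D) ?_) hDG
    intro u
    have h1 : ‖((0:ℝ), u)‖ = ‖u‖ := by
      rw [Prod.norm_def]; simp [norm_zero]
    calc ‖D.comp ((0 : Euc N →L[ℝ] ℝ).prod (ContinuousLinearMap.id ℝ (Euc N))) u‖
        = ‖D ((0:ℝ), u)‖ := rfl
      _ ≤ ‖D‖ * ‖((0:ℝ), u)‖ := D.le_opNorm _
      _ = ‖D‖ * ‖u‖ := by rw [h1]
  have KE : ∀ T' : ℝ, ∀ y : Euc N, 0 ≤ T' → T' ≤ sq → dist y x ≤ ε →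
      |φ (t + T') y - φ t x - (T' * D ((1:ℝ), (0:Euc N)) + D ((0:ℝ), y - x))|
        ≤ 2 * η' * max T' (dist y x) := by
    intro T' y h0 h1 h2
    have hyB := hmemB T' y h0 h1 h2
    have key := Convex.norm_image_sub_le_of_norm_hasFDerivWithin_le'
      (f := fun p : ℝ × Euc N => φ p.1 p.2)
      (f' := fderiv ℝ (fun p : ℝ × Euc N => φ p.1 p.2))
      (φ := D) (s := ball ((t₀, x₀) : ℝ × Euc N) δ₁) (C := 2*η')
      (fun p hp => ((hfd p (hδ₁U hp)).hasFDerivAt).hasFDerivWithinAt)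
      (fun p hp => by
        have haux := hDnear p hp
        have haux2 := hDnear _ hxB
        have h3 : ‖fderiv ℝ (fun p : ℝ × Euc N => φ p.1 p.2) p - D‖ ≤
            ‖fderiv ℝ (fun p : ℝ × Euc N => φ p.1 p.2) p - D₀‖ + ‖D₀ - D‖ :=
          norm_sub_le_norm_sub_add_norm_sub _ _ _
        rw [norm_sub_rev] at haux2
        linarith)
      (convex_ball _ _) hxB hyB
    have hsub : ((t + T', y) : ℝ × Euc N) - (t, x) = ((T' : ℝ), y - x) := by
      rw [Prod.mk_sub_mk, add_sub_cancel_left]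
    have hDsplit : D ((T' : ℝ), y - x)
        = T' * D ((1:ℝ), (0:Euc N)) + D ((0:ℝ), y - x) := by
      have hdec : ((T', y - x) : ℝ × Euc N) = T' • ((1:ℝ), (0:Euc N)) + ((0:ℝ), y - x) := by
        rw [Prod.smul_mk, Prod.mk_add_mk]
        simp
      rw [hdec, map_add, _root_.map_smul]
      rfl
    have hnrm : ‖(((T' : ℝ), y - x) : ℝ × Euc N)‖ = max T' (dist y x) := by
      rw [Prod.norm_def, Real.norm_eq_abs, abs_of_nonneg h0, dist_eq_norm]
    rw [hsub, hDsplit, hnrm] at key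
    exact key
  have hvL : ∀ y z : Euc N, v y ≤ v z + (L:ℝ) * dist y z := by
    intro y z
    have h1 := hv.dist_le_mul y z
    rw [Real.dist_eq] at h1
    have := abs_le.mp h1
    linarith [this.2]
  set V := max (v x) 0 with hVdef
  have hV0 : 0 ≤ V := le_max_right _ _
  have hVVbpre : V + (L:ℝ)*ε + sq ≤ Vb := by
    have h1 : v x ≤ v x₀ + (L:ℝ) * dist x x₀ := hvL x x₀
    have h2 : (L:ℝ) * dist x x₀ ≤ (L:ℝ) * δs := by
      have : dist x x₀ ≤ δs := le_of_lt (lt_of_lt_of_le hdistr.2 (by linarith [hδ₁s, hδ₁0]))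
      exact mul_le_mul_of_nonneg_left this hL0
    have h3 : V ≤ |v x₀| + (L:ℝ)*δs := by
      rcases max_cases (v x) 0 with ⟨he, _⟩ | ⟨he, _⟩
      · rw [hVdef, he]; have := le_abs_self (v x₀); linarith
      · rw [hVdef, he]; positivity
    have h4 : (L:ℝ)*ε ≤ (L:ℝ) := by
      have := mul_le_mul_of_nonneg_left hε1 hL0
      linarith
    rw [hVbdef]; linarith
  have hVVb := hVVbpre
  clear_value V
  by_cases hP : (ball x ε ∩ {y : Euc N | 0 < v y}).Nonempty
  · -- nonempty case
    have hEP : Eplus v ε x = ball x ε ∩ {y : Euc N | 0 < v y} := if_pos hP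
    have hsqη : sq ≤ η/3 := le_trans hqsq (le_trans hq hcB)
    have hVVb' : V ≤ Vb := by
      have h1 : 0 ≤ (L:ℝ)*ε := mul_nonneg hL0 hε0.le
      linarith only [hVVb, h1, hsq0]
    have hPfact : ∀ xP ∈ ball x ε ∩ {y : Euc N | 0 < v y},
        0 < v xP ∧ dist xP x ≤ ε ∧ TPe v ε x xP = cutC ε (ε / v xP) := by
      intro xP hxP
      refine ⟨hxP.2, le_of_lt (mem_ball.mp hxP.1), ?_⟩
      rw [TPe, if_pos hP, max_eq_left (le_of_lt hxP.2)]
    have hTfacts : ∀ xP ∈ ball x ε ∩ {y : Euc N | 0 < v y},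
        0 < TPe v ε x xP ∧ TPe v ε x xP ≤ sq ∧ ε^2 ≤ TPe v ε x xP * sq ∧
        ε ≤ TPe v ε x xP * (V + (L:ℝ)*ε + sq) ∧ ε ≤ TPe v ε x xP * Vb := by
      intro xP hxP
      obtain ⟨h1, h2, h3⟩ := hPfact xP hxP
      have hT0 : 0 < TPe v ε x xP := by rw [h3]; exact cutC_pos hε0 hε1
      have hTsq : TPe v ε x xP ≤ sq := by rw [h3, hsqdef]; exact cutC_le_sq
      have hTcb : ε^((3:ℝ)/2) ≤ TPe v ε x xP := by rw [h3]; exact cb_le_cutC hε0 hε1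
      have hwV : v xP ≤ V + (L:ℝ)*ε := by
        have h4 := hvL xP x
        have h5 : (L:ℝ) * dist xP x ≤ (L:ℝ)*ε := mul_le_mul_of_nonneg_left h2 hL0
        have h6 : v x ≤ V := by rw [hVdef]; exact le_max_left _ _
        linarith only [h4, h5, h6]
      have hA' : ε ≤ TPe v ε x xP * (V + (L:ℝ)*ε + sq) := by
        rw [h3, hsqdef]
        exact lemA hε0 h1 hV0 (mul_nonneg hL0 hε0.le) hwV
      have hAVb : ε ≤ TPe v ε x xP * Vb :=
        le_trans hA' (mul_le_mul_of_nonneg_left hVVb hT0.le)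
      have hε2T : ε^2 ≤ TPe v ε x xP * sq := by
        have h7 : ε^((3:ℝ)/2) * sq ≤ TPe v ε x xP * sq :=
          mul_le_mul_of_nonneg_right hTcb hsq0.le
        have h8 : ε^((3:ℝ)/2) * sq = ε^2 := by rw [hsqdef]; exact hcbsq
        linarith only [h7, h8]
      exact ⟨hT0, hTsq, hε2T, hA', hAVb⟩
    have hbddA : BddAbove ((fun xP => φ (t + TPe v ε x xP) xP) '' Eplus v ε x) := by
      refine ⟨M, ?_⟩
      rintro b ⟨xP, hxP, rfl⟩
      rw [hEP] at hxP
      obtain ⟨hT0, hTsq, -, -, -⟩ := hTfacts xP hxP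
      have hmem := hδ₁U (hmemB (TPe v ε x xP) xP hT0.le hTsq (hPfact xP hxP).2.1)
      exact (abs_le.mp (hφb _ ⟨hmem.1.1, hmem.1.2.le⟩ xP)).2
    have hneI : ((fun xP => φ (t + TPe v ε x xP) xP) '' Eplus v ε x).Nonempty := by
      obtain ⟨z, hz⟩ := hP
      exact ⟨_, mem_image_of_mem _ (by rw [hEP]; exact hz)⟩
    have hKEb : ∀ xP ∈ ball x ε ∩ {y : Euc N | 0 < v y},
        |φ (t + TPe v ε x xP) xP - φ t x -
          (TPe v ε x xP * D ((1:ℝ),(0:Euc N)) + D ((0:ℝ), xP - x))|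
          ≤ 2*η'*(TPe v ε x xP * Vb) := by
      intro xP hxP
      obtain ⟨hv1, hd1, -⟩ := hPfact xP hxP
      obtain ⟨hT0, hTsq, -, -, hTVb⟩ := hTfacts xP hxP
      have h1 := KE _ xP hT0.le hTsq hd1
      have h2 : max (TPe v ε x xP) (dist xP x) ≤ TPe v ε x xP * Vb :=
        max_le (le_mul_of_one_le_right hT0.le hVb1) (le_trans hd1 hTVb)
      exact le_trans h1 (mul_le_mul_of_nonneg_left h2 (by positivity))
    have hLsqG : (((L:ℝ)*ε + sq))*G ≤ η/3 := by
      have k1 : (L:ℝ)*ε + sq ≤ ((L:ℝ)+1)*q := by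
        have := mul_le_mul_of_nonneg_left hεq hL0
        linarith only [this, hqsq]
      have k2 : (((L:ℝ)+1)*G)*q ≤ (((L:ℝ)+1)*G)*(η/(3*((L:ℝ)+1)*G)) :=
        mul_le_mul_of_nonneg_left (le_trans hq hcC) (by positivity)
      have k3 : (((L:ℝ)+1)*G)*(η/(3*((L:ℝ)+1)*G)) = η/3 := by
        have j1 : (L:ℝ)+1 ≠ 0 := by positivity
        have j2 : G ≠ 0 := ne_of_gt hG0
        field_simp
      have k4 : ((L:ℝ)*ε + sq)*G ≤ (((L:ℝ)+1)*q)*G :=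
        mul_le_mul_of_nonneg_right k1 (le_of_lt hG0)
      have k5 : (((L:ℝ)+1)*q)*G = (((L:ℝ)+1)*G)*q := by ring
      linarith only [k2, k3, k4, k5.le, k5.ge]
    set A := D ((1:ℝ), (0:Euc N)) with hAdef
    set W := ‖gradient (φ t) x‖ with hWdef
    have hW0 : 0 ≤ W := norm_nonneg _
    constructor
    · -- upper estimate, near-sup point
      have hlt : Rup v ε φ t x - ε^2 < Rup v ε φ t x := by
        have h0 : (0:ℝ) < ε^2 := by positivity
        linarith only [h0]
      obtain ⟨b, hbmem, hblt⟩ := exists_lt_of_lt_csSup hneI hlt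
      obtain ⟨xP, hxPE, rfl⟩ := hbmem
      refine ⟨xP, hxPE, ?_⟩
      rw [hEP] at hxPE
      obtain ⟨hv1, hd1, -⟩ := hPfact xP hxPE
      obtain ⟨hT0, hTsq, hε2T, hTV, hTVb⟩ := hTfacts xP hxPE
      have hKE1 := (abs_le.mp (hKEb xP hxPE)).2
      have hip : D ((0:ℝ), xP - x) ≤ TPe v ε x xP*(V*W) + TPe v ε x xP*(((L:ℝ)*ε+sq)*G) := by
        have i1 : D ((0:ℝ), xP - x) = ⟪gradient (φ t) x, xP - x⟫ := (hg _).symm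
        have i2 : ⟪gradient (φ t) x, xP - x⟫ ≤ W * ‖xP - x‖ := real_inner_le_norm _ _
        have i3 : ‖xP - x‖ ≤ ε := by rw [← dist_eq_norm]; exact hd1
        have i4 : W * ‖xP - x‖ ≤ W * ε := mul_le_mul_of_nonneg_left i3 hW0
        have i5 : W * ε ≤ W * (TPe v ε x xP * (V + (L:ℝ)*ε + sq)) :=
          mul_le_mul_of_nonneg_left hTV hW0
        have i6 : W * (TPe v ε x xP * (V + (L:ℝ)*ε + sq))
            = TPe v ε x xP*(V*W) + TPe v ε x xP*(((L:ℝ)*ε+sq)*W) := by ring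
        have i7 : TPe v ε x xP*(((L:ℝ)*ε+sq)*W) ≤ TPe v ε x xP*(((L:ℝ)*ε+sq)*G) := by
          have i8 : ((L:ℝ)*ε+sq)*W ≤ ((L:ℝ)*ε+sq)*G := by
            have i9 : (0:ℝ) ≤ (L:ℝ)*ε+sq := by positivity
            exact mul_le_mul_of_nonneg_left hgn i9
          exact mul_le_mul_of_nonneg_left i8 hT0.le
        linarith only [i1.le, i1.ge, i2, i4, i5, i6.le, i7]
      have e3 : TPe v ε x xP*(((L:ℝ)*ε+sq)*G) ≤ TPe v ε x xP*(η/3) :=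
        mul_le_mul_of_nonneg_left hLsqG hT0.le
      have e4 : 2*η'*(TPe v ε x xP*Vb) ≤ TPe v ε x xP*(η/3) := by
        have e5 : 2*η'*(TPe v ε x xP*Vb) = TPe v ε x xP*(2*η'*Vb) := by ring
        rw [e5]
        exact mul_le_mul_of_nonneg_left hη'Vb hT0.le
      have e6 : ε^2 ≤ TPe v ε x xP*(η/3) :=
        le_trans hε2T (mul_le_mul_of_nonneg_left hsqη hT0.le)
      rw [ha]
      have e7 : TPe v ε x xP * (A + V*W + η)
          = TPe v ε x xP*A + TPe v ε x xP*(V*W) + 3*(TPe v ε x xP*(η/3)) := by ring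
      linarith only [hblt, hKE1, hip, e3, e4, e6, e7.le, e7.ge]
    · -- lower estimate
      by_cases hreg : V ≤ q
      · -- regime (ii): small speed
        obtain ⟨z, hz⟩ := hP
        have hzE : z ∈ Eplus v ε x := by rw [hEP]; exact hz
        refine ⟨z, hzE, ?_⟩
        obtain ⟨hv1, hd1, -⟩ := hPfact z hz
        obtain ⟨hT0, hTsq, hε2T, hTV, hTVb⟩ := hTfacts z hz
        have hRge : φ (t + TPe v ε x z) z ≤ Rup v ε φ t x :=
          le_csSup hbddA (mem_image_of_mem _ hzE)
        have hKE1 := (abs_le.mp (hKEb z hz)).1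
        have hip : -(TPe v ε x z*(q*G)) - TPe v ε x z*(((L:ℝ)*ε+sq)*G)
            ≤ D ((0:ℝ), z - x) := by
          have i1 : D ((0:ℝ), z - x) = ⟪gradient (φ t) x, z - x⟫ := (hg _).symm
          have i2 : |⟪gradient (φ t) x, z - x⟫| ≤ W * ‖z - x‖ :=
            abs_real_inner_le_norm _ _
          have i3 : ‖z - x‖ ≤ ε := by rw [← dist_eq_norm]; exact hd1
          have i4 : W * ‖z - x‖ ≤ W * ε := mul_le_mul_of_nonneg_left i3 hW0
          have i5 : W * ε ≤ W * (TPe v ε x z * (V + (L:ℝ)*ε + sq)) :=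
            mul_le_mul_of_nonneg_left hTV hW0
          have i6 : W * (TPe v ε x z * (V + (L:ℝ)*ε + sq))
              = TPe v ε x z*(V*W) + TPe v ε x z*(((L:ℝ)*ε+sq)*W) := by ring
          have i7 : TPe v ε x z*(((L:ℝ)*ε+sq)*W) ≤ TPe v ε x z*(((L:ℝ)*ε+sq)*G) := by
            have i9 : (0:ℝ) ≤ (L:ℝ)*ε+sq := by positivity
            exact mul_le_mul_of_nonneg_left (mul_le_mul_of_nonneg_left hgn i9) hT0.le
          have i10 : TPe v ε x z*(V*W) ≤ TPe v ε x z*(q*G) := by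
            have i11 : V*W ≤ q*G := mul_le_mul hreg hgn hW0 (by positivity)
            exact mul_le_mul_of_nonneg_left i11 hT0.le
          have i12 := (abs_le.mp i2).1
          linarith only [i1.le, i1.ge, i12, i4, i5, i6.le, i7, i10]
        have e4 : 2*η'*(TPe v ε x z*Vb) ≤ TPe v ε x z*(η/3) := by
          have e5 : 2*η'*(TPe v ε x z*Vb) = TPe v ε x z*(2*η'*Vb) := by ring
          rw [e5]; exact mul_le_mul_of_nonneg_left hη'Vb hT0.le
        have hVW : TPe v ε x z*(V*W) ≤ TPe v ε x z*(q*G) := by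
          have i11 : V*W ≤ q*G := mul_le_mul hreg hgn hW0 (by positivity)
          exact mul_le_mul_of_nonneg_left i11 hT0.le
        have hqG : TPe v ε x z*((2*q)*G) ≤ TPe v ε x z*(2*η/3 - ((L:ℝ)*ε+sq)*G) := by
          refine mul_le_mul_of_nonneg_left ?_ hT0.le
          have k1 : 2*q + ((L:ℝ)*ε+sq) ≤ ((L:ℝ)+3)*q := by
            have := mul_le_mul_of_nonneg_left hεq hL0
            linarith only [this, hqsq]
          have k2 : (((L:ℝ)+3)*G)*q ≤ (((L:ℝ)+3)*G)*(2*η/(3*((L:ℝ)+3)*G)) :=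
            mul_le_mul_of_nonneg_left (le_trans hq hcD) (by positivity)
          have k3 : (((L:ℝ)+3)*G)*(2*η/(3*((L:ℝ)+3)*G)) = 2*η/3 := by
            have j1 : (L:ℝ)+3 ≠ 0 := by positivity
            have j2 : G ≠ 0 := ne_of_gt hG0
            field_simp
          have k4 : (2*q + ((L:ℝ)*ε+sq))*G ≤ (((L:ℝ)+3)*q)*G :=
            mul_le_mul_of_nonneg_right k1 (le_of_lt hG0)
          have k5 : (((L:ℝ)+3)*q)*G = (((L:ℝ)+3)*G)*q := by ring
          have k6 : (2*q + ((L:ℝ)*ε+sq))*G = (2*q)*G + ((L:ℝ)*ε+sq)*G := by ring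
          linarith only [k2, k3.le, k3.ge, k4, k5.le, k5.ge, k6.le, k6.ge]
        rw [ha, ge_iff_le]
        have e7 : TPe v ε x z * (A + V*W - η)
            = TPe v ε x z*A + TPe v ε x z*(V*W) - 3*(TPe v ε x z*(η/3)) := by ring
        have e8 : TPe v ε x z*((2*q)*G) = 2*(TPe v ε x z*(q*G)) := by ring
        have e9 : TPe v ε x z*(2*η/3 - ((L:ℝ)*ε+sq)*G)
            = 2*(TPe v ε x z*(η/3)) - TPe v ε x z*(((L:ℝ)*ε+sq)*G) := by ring
        linarith only [hRge, hKE1, hip, e4, hVW, hqG, e7.le, e7.ge, e8.le, e8.ge,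
          e9.le, e9.ge]
      · -- regime (i): positive speed
        push_neg at hreg
        have hVq : q < V := hreg
        have hV0' : 0 < V := lt_trans hq0 hVq
        have hvxV : v x = V := by
          rcases le_total 0 (v x) with h | h
          · rw [hVdef]; exact (max_eq_left h).symm
          · exfalso
            have : V = 0 := by rw [hVdef]; exact max_eq_right h
            rw [this] at hV0'; exact lt_irrefl _ hV0'
        by_cases hgz : gradient (φ t) x = 0
        · -- gradient zero
          have hxPm : x ∈ ball x ε ∩ {y : Euc N | 0 < v y} :=
            ⟨mem_ball_self hε0, show 0 < v x by rw [hvxV]; exact hV0'⟩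
          refine ⟨x, by rw [hEP]; exact hxPm, ?_⟩
          obtain ⟨hT0, hTsq, -, -, -⟩ := hTfacts x hxPm
          have hRge : φ (t + TPe v ε x x) x ≤ Rup v ε φ t x :=
            le_csSup hbddA (mem_image_of_mem _ (by rw [hEP]; exact hxPm))
          have hKE1 := (abs_le.mp (hKEb x hxPm)).1
          have hsx : x - x = (0:Euc N) := sub_self x
          have hD00 : D ((0:ℝ), (0:Euc N)) = 0 := by
            have h0 : (((0:ℝ), (0:Euc N)) : ℝ × Euc N) = 0 := rfl
            rw [h0, map_zero]
          rw [hsx, hD00] at hKE1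
          have e4 : 2*η'*(TPe v ε x x*Vb) ≤ TPe v ε x x*(η/3) := by
            have e5 : 2*η'*(TPe v ε x x*Vb) = TPe v ε x x*(2*η'*Vb) := by ring
            rw [e5]; exact mul_le_mul_of_nonneg_left hη'Vb hT0.le
          have hWz : W = 0 := by rw [hWdef, hgz, norm_zero]
          rw [ha, ge_iff_le, hWz, mul_zero, add_zero]
          have e6 : TPe v ε x x*(η/3) ≤ TPe v ε x x*η :=
            mul_le_mul_of_nonneg_left (by linarith only [hη]) hT0.le
          have e7 : TPe v ε x x * (A - η) = TPe v ε x x*A - TPe v ε x x*η := by ring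
          linarith only [hRge, hKE1, e4, e6, e7.le, e7.ge]
        · -- gradient nonzero
          have hgne : gradient (φ t) x ≠ 0 := hgz
          have hWne : W ≠ 0 := by rw [hWdef]; exact norm_ne_zero_iff.mpr hgne
          have hWpos : 0 < W := lt_of_le_of_ne hW0 (Ne.symm hWne)
          set u := ‖gradient (φ t) x‖⁻¹ • gradient (φ t) x with hudef
          have hnu : ‖u‖ = 1 := by rw [hudef]; exact norm_smul_inv_norm hgne
          clear_value u
          set lam := ε * (1 - sq) with hlamdef
          have hlam0 : 0 ≤ lam := by
            rw [hlamdef]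
            have h0 : 0 ≤ 1 - sq := by linarith only [hsq1]
            positivity
          have hlamlt : lam < ε := by
            have h0 : 0 < ε * sq := mul_pos hε0 hsq0
            have e0 : lam = ε - ε*sq := by rw [hlamdef]; ring
            linarith only [h0, e0.le, e0.ge]
          clear_value lam
          set yP := x + lam • u with hyPdef
          clear_value yP
          have hdyP : dist yP x = lam := by
            rw [hyPdef, dist_eq_norm, add_sub_cancel_left, norm_smul, Real.norm_eq_abs,
              abs_of_nonneg hlam0, hnu, mul_one]
          have hLεq : (L:ℝ)*ε ≤ q/2 := by
            have m1 : (L:ℝ)*ε ≤ (L:ℝ)*sq := mul_le_mul_of_nonneg_left hεsq hL0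
            have m2 : (L:ℝ)*sq = ((L:ℝ)*q)*q := by rw [← hqq]; ring
            have m3 : (L:ℝ)*q ≤ (L:ℝ)*(1/(2*(L:ℝ)+2)) :=
              mul_le_mul_of_nonneg_left (le_trans hq hcE) hL0
            have m4 : (L:ℝ)*(1/(2*(L:ℝ)+2)) ≤ 1/2 := by
              rw [mul_one_div, div_le_div_iff₀ (by positivity) (by norm_num)]
              linarith only [hL0]
            have m5 : ((L:ℝ)*q)*q ≤ (1/2)*q :=
              mul_le_mul_of_nonneg_right (le_trans m3 m4) hq0.le
            have m6 : (1/2)*q = q/2 := by ring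
            linarith only [m1, m2.le, m2.ge, m5, m6.le, m6.ge]
          have hvyP : q/2 ≤ v yP := by
            have n1 := hvL x yP
            have n2 : dist x yP = lam := by rw [dist_comm]; exact hdyP
            have n3 : (L:ℝ)*lam ≤ (L:ℝ)*ε := mul_le_mul_of_nonneg_left hlamlt.le hL0
            rw [n2] at n1
            linarith only [n1, n3, hLεq, hVq, hvxV.le, hvxV.ge]
          have hvyP0 : 0 < v yP := lt_of_lt_of_le (by positivity) hvyP
          have hyPP : yP ∈ ball x ε ∩ {y : Euc N | 0 < v y} :=
            ⟨mem_ball.mpr (by rw [hdyP]; exact hlamlt), hvyP0⟩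
          refine ⟨yP, by rw [hEP]; exact hyPP, ?_⟩
          obtain ⟨hv1, hd1, hTeq⟩ := hPfact yP hyPP
          obtain ⟨hT0, hTsq, hε2T, hTV, hTVb⟩ := hTfacts yP hyPP
          have hwV : V ≤ v yP + (L:ℝ)*ε := by
            have n1 := hvL x yP
            have n2 : dist x yP = lam := by rw [dist_comm]; exact hdyP
            have n3 : (L:ℝ)*lam ≤ (L:ℝ)*ε := mul_le_mul_of_nonneg_left hlamlt.le hL0
            rw [n2] at n1
            linarith only [n1, n3, hvxV.le, hvxV.ge]
          set γ := sq*(2*(L:ℝ)+Vb) with hγdef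
          have hγexp : γ = 2*(L:ℝ)*sq + sq*Vb := by rw [hγdef]; ring
          clear_value γ
          have hγ0 : 0 ≤ γ := by
            have j1 : 0 ≤ 2*(L:ℝ)*sq := by positivity
            have j2 : 0 ≤ sq*Vb := by positivity
            linarith only [hγexp.le, hγexp.ge, j1, j2]
          have hTVup : TPe v ε x yP * V ≤ ε*(1+γ) := by
            have oE : ε*(1+γ) = ε + ε*γ := by ring
            have o1 : TPe v ε x yP ≤ max (ε / v yP) (ε^((3:ℝ)/2)) := by
              rw [hTeq]; exact cutC_le_max
            rcases max_cases (ε / v yP) (ε^((3:ℝ)/2)) with ⟨hmx, hcase⟩ | ⟨hmx, hcase⟩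
            · rw [hmx] at o1
              have o2 : TPe v ε x yP * V ≤ (ε / v yP) * V :=
                mul_le_mul_of_nonneg_right o1 hV0
              have o3 : (ε / v yP) * V ≤ (ε / v yP) * (v yP + (L:ℝ)*ε) :=
                mul_le_mul_of_nonneg_left hwV (by positivity)
              have o4 : (ε / v yP) * (v yP) = ε := div_mul_cancel₀ _ (ne_of_gt hvyP0)
              have o5 : ε / v yP ≤ 2*sq := by
                rw [div_le_iff₀ hvyP0]
                have o6 : 2*sq*(q/2) ≤ 2*sq*(v yP) :=
                  mul_le_mul_of_nonneg_left hvyP (by positivity)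
                have o7 : 2*sq*(q/2) = sq*q := by ring
                have o8 : sq*sq ≤ sq*q := mul_le_mul_of_nonneg_left hqsq hsq0.le
                linarith only [o6, o7.le, o7.ge, o8, hsqsq.le, hsqsq.ge]
              have o9 : (ε / v yP) * ((L:ℝ)*ε) ≤ (2*sq) * ((L:ℝ)*ε) :=
                mul_le_mul_of_nonneg_right o5 (by positivity)
              have o10 : (ε / v yP)*(v yP + (L:ℝ)*ε)
                  = (ε / v yP)*(v yP) + (ε / v yP)*((L:ℝ)*ε) := by ring
              have o11 : (2*sq)*((L:ℝ)*ε) = ε*(2*(L:ℝ)*sq) := by ring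
              have o12 : ε*(2*(L:ℝ)*sq) ≤ ε*γ := by
                refine mul_le_mul_of_nonneg_left ?_ hε0.le
                have j2 : 0 ≤ sq*Vb := by positivity
                linarith only [hγexp.le, hγexp.ge, j2]
              linarith only [o2, o3, o4.le, o4.ge, o9, o10.le, o10.ge, o11.le, o11.ge,
                o12, oE.le, oE.ge]
            · rw [hmx] at o1
              have o2 : TPe v ε x yP * V ≤ ε^((3:ℝ)/2) * V :=
                mul_le_mul_of_nonneg_right o1 hV0
              have o3 : ε^((3:ℝ)/2) * V ≤ ε^((3:ℝ)/2) * Vb :=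
                mul_le_mul_of_nonneg_left hVVb' (by positivity)
              have o4 : ε^((3:ℝ)/2) * Vb = ε*(sq*Vb) := by
                rw [cb_eq hε0.le, ← hsqdef]; ring
              have o5 : ε*(sq*Vb) ≤ ε*γ := by
                refine mul_le_mul_of_nonneg_left ?_ hε0.le
                have j1 : 0 ≤ 2*(L:ℝ)*sq := by positivity
                linarith only [hγexp.le, hγexp.ge, j1]
              linarith only [o2, o3, o4.le, o4.ge, o5, oE.le, oE.ge, hε0.le]
          have hipEq : D ((0:ℝ), yP - x) = lam * W := by
            have p1 : yP - x = lam • u := by rw [hyPdef, add_sub_cancel_left]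
            have p2 : D ((0:ℝ), yP - x) = ⟪gradient (φ t) x, yP - x⟫ := (hg _).symm
            have p3 : ⟪gradient (φ t) x, (lam • u : Euc N)⟫
                = lam * ⟪gradient (φ t) x, u⟫ := real_inner_smul_right _ _ _
            have p4 : ⟪gradient (φ t) x, u⟫ = W := by
              rw [hudef, real_inner_smul_right, real_inner_self_eq_norm_mul_norm, ← hWdef]
              field_simp
            rw [p2, p1, p3, p4]
          have hkey : TPe v ε x yP*(V*W) ≤ lam*W + TPe v ε x yP*(2*η/3) := by
            have k1 : TPe v ε x yP*V - lam ≤ ε*(γ+sq) := by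
              have e : ε*(1+γ) - lam = ε*(γ+sq) := by rw [hlamdef]; ring
              linarith only [hTVup, e.le, e.ge]
            have k2 : (TPe v ε x yP*V - lam)*W ≤ (ε*(γ+sq))*W :=
              mul_le_mul_of_nonneg_right k1 hW0
            have k3 : (ε*(γ+sq))*W ≤ (ε*(γ+sq))*G := by
              have j1 : 0 ≤ ε*(γ+sq) := by
                have : 0 ≤ γ + sq := by linarith only [hγ0, hsq0.le]
                positivity
              exact mul_le_mul_of_nonneg_left hgn j1
            have k4 : ε*((γ+sq)*G) ≤ (TPe v ε x yP*Vb)*((γ+sq)*G) := by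
              have j1 : 0 ≤ (γ+sq)*G := by
                have : 0 ≤ γ + sq := by linarith only [hγ0, hsq0.le]
                positivity
              exact mul_le_mul_of_nonneg_right hTVb j1
            have k5 : (TPe v ε x yP*Vb)*((γ+sq)*G) ≤ TPe v ε x yP*(2*η/3) := by
              have k6 : Vb*((γ+sq)*G) ≤ 2*η/3 := by
                have k7 : γ + sq = sq*(2*(L:ℝ)+Vb+1) := by rw [hγdef]; ring
                have k8' : Vb*((γ+sq)*G) = ((2*(L:ℝ)+Vb+1)*Vb*G)*sq := by rw [k7]; ring
                have k8'' : ((2*(L:ℝ)+Vb+1)*Vb*G)*sq ≤ ((2*(L:ℝ)+Vb+1)*Vb*G)*q := by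
                  have j1 : (0:ℝ) ≤ (2*(L:ℝ)+Vb+1)*Vb*G := by positivity
                  exact mul_le_mul_of_nonneg_left hqsq j1
                have k9 : (Vb*(2*(L:ℝ)+Vb+1)*G)*q
                    ≤ (Vb*(2*(L:ℝ)+Vb+1)*G)*(2*η/(3*(Vb*(2*(L:ℝ)+Vb+1)*G))) := by
                  have j1 : (0:ℝ) ≤ Vb*(2*(L:ℝ)+Vb+1)*G := by positivity
                  exact mul_le_mul_of_nonneg_left (le_trans hq hcF) j1
                have k10 : (Vb*(2*(L:ℝ)+Vb+1)*G)*(2*η/(3*(Vb*(2*(L:ℝ)+Vb+1)*G)))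
                    = 2*η/3 := by
                  have j2 : G ≠ 0 := ne_of_gt hG0
                  have j3 : Vb ≠ 0 := ne_of_gt hVb0
                  have j4 : 2*(L:ℝ)+Vb+1 ≠ 0 := by positivity
                  field_simp
                have k9' : ((2*(L:ℝ)+Vb+1)*Vb*G)*q = (Vb*(2*(L:ℝ)+Vb+1)*G)*q := by ring
                linarith only [k8'.le, k8'.ge, k8'', k9'.le, k9'.ge, k9, k10.le, k10.ge]
              have k11 : (TPe v ε x yP*Vb)*((γ+sq)*G) = TPe v ε x yP*(Vb*((γ+sq)*G)) := by
                ring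
              rw [k11]; exact mul_le_mul_of_nonneg_left k6 hT0.le
            have k12 : (TPe v ε x yP*V - lam)*W = TPe v ε x yP*(V*W) - lam*W := by ring
            have k13 : (ε*(γ+sq))*G = ε*((γ+sq)*G) := by ring
            linarith only [k2, k3, k4, k5, k12.le, k12.ge, k13.le, k13.ge]
          have hRge : φ (t + TPe v ε x yP) yP ≤ Rup v ε φ t x :=
            le_csSup hbddA (mem_image_of_mem _ (by rw [hEP]; exact hyPP))
          have hKE1 := (abs_le.mp (hKEb yP hyPP)).1
          have e4 : 2*η'*(TPe v ε x yP*Vb) ≤ TPe v ε x yP*(η/3) := by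
            have e5 : 2*η'*(TPe v ε x yP*Vb) = TPe v ε x yP*(2*η'*Vb) := by ring
            rw [e5]; exact mul_le_mul_of_nonneg_left hη'Vb hT0.le
          rw [ha, ge_iff_le]
          have e7 : TPe v ε x yP * (A + V*W - η)
              = TPe v ε x yP*A + TPe v ε x yP*(V*W) - 3*(TPe v ε x yP*(η/3)) := by ring
          have e8 : TPe v ε x yP*(2*η/3) = 2*(TPe v ε x yP*(η/3)) := by ring
          linarith only [hRge, hKE1, hipEq.le, hipEq.ge, hkey, e4, e7.le, e7.ge,
            e8.le, e8.ge]

  · -- empty case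
    have hEP : Eplus v ε x = {x} := if_neg hP
    have hTP : TPe v ε x x = ε ^ 2 := if_neg hP
    have hvx : V = 0 := by
      rw [hVdef]
      rcases le_or_gt (v x) 0 with h | h
      · exact max_eq_right h
      · exact absurd ⟨x, mem_ball_self hε0, h⟩ hP
    have hRup : Rup v ε φ t x = φ (t + ε ^ 2) x := by
      rw [Rup, hEP, Set.image_singleton, csSup_singleton, hTP]
    have hε2 : (0:ℝ) ≤ ε ^ 2 := by positivity
    have hε2sq : ε ^ 2 ≤ sq := by
      rw [hsqdef]; exact le_trans (sqeps_le_cb hε0 hε1) (cb_le_sq hε0 hε1)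
    have hKE := KE (ε ^ 2) x hε2 hε2sq (by rw [dist_self]; exact hε0.le)
    rw [sub_self, dist_self, max_eq_left hε2] at hKE
    have hD00 : D ((0:ℝ), (0:Euc N)) = 0 := by
      have : (((0:ℝ), (0:Euc N)) : ℝ × Euc N) = 0 := rfl
      rw [this, map_zero]
    rw [hD00, add_zero] at hKE
    have habs := abs_le.mp hKE
    have h2η' : 2 * η' ≤ η := by
      have h1 : 2*η'*1 ≤ 2*η'*Vb := by
        have h0 : (0:ℝ) ≤ 2*η' := by positivity
        exact mul_le_mul_of_nonneg_left hVb1 h0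
      rw [mul_one] at h1
      linarith only [h1, hη'Vb, hη]
    have hmul : 2 * η' * ε^2 ≤ η * ε^2 := mul_le_mul_of_nonneg_right h2η' hε2
    constructor
    · refine ⟨x, by rw [hEP]; exact rfl, ?_⟩
      rw [hRup, hTP, ha, hvx, zero_mul, add_zero]
      have hring : ε^2 * (D ((1:ℝ),(0:Euc N)) + η)
          = ε^2 * D ((1:ℝ),(0:Euc N)) + η * ε^2 := by ring
      rw [hring]
      linarith only [habs.2, hmul]
    · refine ⟨x, by rw [hEP]; exact rfl, ?_⟩
      rw [hRup, hTP, ha, hvx, zero_mul, add_zero]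
      have hring : ε^2 * (D ((1:ℝ),(0:Euc N)) - η)
          = ε^2 * D ((1:ℝ),(0:Euc N)) - η * ε^2 := by ring
      rw [ge_iff_le, hring]
      linarith only [habs.1, hmul]




/-- Lemma 3.4: consistency lemma for the eikonal equation. -/
theorem consistency_eikonal
    {N : ℕ} (hN : 1 ≤ N) (T : ℝ) (hT : 0 < T)
    (v : Euc N → ℝ) (hv : ∃ L, LipschitzWith L v)
    (φ : ℝ → Euc N → ℝ)
    (hφ : ContDiffOn ℝ 1 (fun p : ℝ × Euc N => φ p.1 p.2) (Ioc (0:ℝ) T ×ˢ univ))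
    (hφb : ∃ M, ∀ t ∈ Ioc (0:ℝ) T, ∀ x, |φ t x| ≤ M)
    (t₀ : ℝ) (x₀ : Euc N) (ht₀ : t₀ ∈ Ioo (0:ℝ) T) :
    ∃ o : ℝ → ℝ → ℝ, (∀ ε r, 0 ≤ o ε r) ∧
      Tendsto (fun p : ℝ × ℝ => o p.1 p.2) (𝓝[Ioi 0 ×ˢ Ioi 0] ((0:ℝ), (0:ℝ))) (𝓝 0) ∧
      ∃ ε₀ > (0:ℝ), ∃ r₀ > (0:ℝ), ∀ ε ∈ Ioo (0:ℝ) ε₀, ∀ r ∈ Ioo (0:ℝ) r₀,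
        ∀ (t : ℝ) (x : Euc N), dist (t, x) (t₀, x₀) < r →
          (∃ xP ∈ Eplus v ε x,
            Rup v ε φ t x - φ t x ≤ TPe v ε x xP *
              (deriv (fun s => φ s x) t + max (v x) 0 * ‖gradient (φ t) x‖ + o ε r)) ∧
          (∃ yP ∈ Eplus v ε x,
            Rup v ε φ t x - φ t x ≥ TPe v ε x yP *
              (deriv (fun s => φ s x) t + max (v x) 0 * ‖gradient (φ t) x‖ - o ε r)) ∧
          (∃ yC ∈ Eminus v ε x,
            Rlo v ε φ t x - φ t x ≤ TCe v ε x yC *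
              (deriv (fun s => φ s x) t - max (-v x) 0 * ‖gradient (φ t) x‖ + o ε r)) ∧
          (∃ xC ∈ Eminus v ε x,
            Rlo v ε φ t x - φ t x ≥ TCe v ε x xC *
              (deriv (fun s => φ s x) t - max (-v x) 0 * ‖gradient (φ t) x‖ - o ε r)) := by
  obtain ⟨L, hL⟩ := hv
  obtain ⟨M, hM⟩ := hφb
  set Q4 : ℝ → ℝ → ℝ → Prop := fun ε r κ =>
    ∀ (t : ℝ) (x : Euc N), dist (t, x) (t₀, x₀) < r →
      (∃ xP ∈ Eplus v ε x,
        Rup v ε φ t x - φ t x ≤ TPe v ε x xP *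
          (deriv (fun s => φ s x) t + max (v x) 0 * ‖gradient (φ t) x‖ + κ)) ∧
      (∃ yP ∈ Eplus v ε x,
        Rup v ε φ t x - φ t x ≥ TPe v ε x yP *
          (deriv (fun s => φ s x) t + max (v x) 0 * ‖gradient (φ t) x‖ - κ)) ∧
      (∃ yC ∈ Eminus v ε x,
        Rlo v ε φ t x - φ t x ≤ TCe v ε x yC *
          (deriv (fun s => φ s x) t - max (-v x) 0 * ‖gradient (φ t) x‖ + κ)) ∧
      (∃ xC ∈ Eminus v ε x,
        Rlo v ε φ t x - φ t x ≥ TCe v ε x xC *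
          (deriv (fun s => φ s x) t - max (-v x) 0 * ‖gradient (φ t) x‖ - κ)) with hQ4def
  have hQ : ∀ κ : ℝ, 0 < κ → ∃ ε₀ > (0:ℝ), ∃ r₀ > (0:ℝ),
      ∀ ε ∈ Ioo (0:ℝ) ε₀, ∀ r ∈ Ioo (0:ℝ) r₀, Q4 ε r κ := by
    intro κ hκ
    obtain ⟨ε₁, hε₁, r₁, hr₁, H₁⟩ := core hL hφ hM x₀ ht₀ hκ
    have hLneg : LipschitzWith L (fun y => -v y) := by
      intro y z
      simpa [edist_comm] using hL z y
    have hφneg : ContDiffOn ℝ 1 (fun p : ℝ × Euc N => -(φ p.1 p.2))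
        (Ioc (0:ℝ) T ×ˢ univ) := hφ.neg
    have hMneg : ∀ s ∈ Ioc (0:ℝ) T, ∀ y, |(-(φ s y))| ≤ M := fun s hs y => by
      rw [abs_neg]; exact hM s hs y
    obtain ⟨ε₂, hε₂, r₂, hr₂, H₂⟩ :=
      core (φ := fun s y => -(φ s y)) hLneg hφneg hMneg x₀ ht₀ hκ
    refine ⟨min ε₁ ε₂, lt_min hε₁ hε₂, min r₁ r₂, lt_min hr₁ hr₂, ?_⟩
    rintro ε ⟨hε0, hεlt⟩ r ⟨hr0, hrlt⟩ t x hdist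
    have h1 := H₁ ε ⟨hε0, lt_of_lt_of_le hεlt (min_le_left _ _)⟩ r
      ⟨hr0, lt_of_lt_of_le hrlt (min_le_left _ _)⟩ t x hdist
    have h2 := H₂ ε ⟨hε0, lt_of_lt_of_le hεlt (min_le_right _ _)⟩ r
      ⟨hr0, lt_of_lt_of_le hrlt (min_le_right _ _)⟩ t x hdist
    exact ⟨h1.1, h1.2, convert3 h2.2, convert4 h2.1⟩
  have hmono : ∀ ε r κ κ', 0 ≤ ε → κ ≤ κ' → Q4 ε r κ → Q4 ε r κ' := by
    intro ε r κ κ' hε hκκ hq t x hdist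
    obtain ⟨⟨xP, hxP, h1⟩, ⟨yP, hyP, h2⟩, ⟨yC, hyC, h3⟩, ⟨xC, hxC, h4⟩⟩ := hq t x hdist
    refine ⟨⟨xP, hxP, ?_⟩, ⟨yP, hyP, ?_⟩, ⟨yC, hyC, ?_⟩, ⟨xC, hxC, ?_⟩⟩
    · exact le_trans h1 (mul_le_mul_of_nonneg_left (by linarith) (TPe_nonneg v hε x xP))
    · exact le_trans (mul_le_mul_of_nonneg_left (by linarith) (TPe_nonneg v hε x yP)) h2
    · exact le_trans h3 (mul_le_mul_of_nonneg_left (by linarith) (TCe_nonneg v hε x yC))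
    · exact le_trans (mul_le_mul_of_nonneg_left (by linarith) (TCe_nonneg v hε x xC)) h4
  set o : ℝ → ℝ → ℝ := fun ε r =>
    if h : 0 < ε ∧ 0 < r ∧ ∃ κ, 0 ≤ κ ∧ Q4 ε r κ then
      sInf {κ | 0 ≤ κ ∧ Q4 ε r κ} + min ε r else 0 with hodef
  have hoval : ∀ ε r, (0 < ε ∧ 0 < r ∧ ∃ κ, 0 ≤ κ ∧ Q4 ε r κ) →
      o ε r = sInf {κ | 0 ≤ κ ∧ Q4 ε r κ} + min ε r := by
    intro ε r h
    rw [hodef]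
    exact dif_pos h
  have honneg : ∀ ε r, 0 ≤ o ε r := by
    intro ε r
    by_cases h : 0 < ε ∧ 0 < r ∧ ∃ κ, 0 ≤ κ ∧ Q4 ε r κ
    · rw [hoval ε r h]
      have h1 : 0 ≤ sInf {κ | 0 ≤ κ ∧ Q4 ε r κ} :=
        Real.sInf_nonneg (fun κ hκ => hκ.1)
      have h2 : 0 < min ε r := lt_min h.1 h.2.1
      linarith
    · have hz : o ε r = 0 := by rw [hodef]; exact dif_neg h
      rw [hz]
  refine ⟨o, honneg, ?_, ?_⟩
  · -- Tendsto
    rw [Metric.tendsto_nhds]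
    intro κ hκ
    obtain ⟨ε₃, hε₃, r₃, hr₃, H₃⟩ := hQ (κ/4) (by positivity)
    rw [eventually_nhdsWithin_iff, Metric.eventually_nhds_iff]
    refine ⟨min (min ε₃ r₃) (κ/4), lt_min (lt_min hε₃ hr₃) (by positivity), ?_⟩
    rintro ⟨ε, r⟩ hlt hmem
    have hε0 : 0 < ε := hmem.1
    have hr0 : 0 < r := hmem.2
    rw [Prod.dist_eq, max_lt_iff] at hlt
    have hε' : ε < min (min ε₃ r₃) (κ/4) := by
      have h := hlt.1
      rwa [Real.dist_eq, sub_zero, abs_of_pos hε0] at h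
    have hr' : r < min (min ε₃ r₃) (κ/4) := by
      have h := hlt.2
      rwa [Real.dist_eq, sub_zero, abs_of_pos hr0] at h
    have hq4 : Q4 ε r (κ/4) :=
      H₃ ε ⟨hε0, lt_of_lt_of_le hε' (le_trans (min_le_left _ _) (min_le_left _ _))⟩
        r ⟨hr0, lt_of_lt_of_le hr' (le_trans (min_le_left _ _) (min_le_right _ _))⟩
    have hne : ∃ κ', 0 ≤ κ' ∧ Q4 ε r κ' := ⟨κ/4, by positivity, hq4⟩
    have hval := hoval ε r ⟨hε0, hr0, hne⟩
    have hsInf : sInf {κ' | 0 ≤ κ' ∧ Q4 ε r κ'} ≤ κ/4 :=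
      csInf_le ⟨0, fun b hb => hb.1⟩ ⟨by positivity, hq4⟩
    have hminr : min ε r ≤ ε := min_le_left _ _
    have hεκ : ε < κ/4 := lt_of_lt_of_le hε' (min_le_right _ _)
    have ho' : o ε r < κ := by
      rw [hval]
      linarith
    have hon := honneg ε r
    rw [Real.dist_eq, sub_zero, abs_of_nonneg hon]
    exact ho'
  · -- main statement
    obtain ⟨ε₄, hε₄, r₄, hr₄, H₄⟩ := hQ 1 one_pos
    refine ⟨ε₄, hε₄, r₄, hr₄, ?_⟩
    rintro ε ⟨hε0, hεlt⟩ r ⟨hr0, hrlt⟩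
    have hq4 : Q4 ε r 1 := H₄ ε ⟨hε0, hεlt⟩ r ⟨hr0, hrlt⟩
    have hne : ∃ κ, 0 ≤ κ ∧ Q4 ε r κ := ⟨1, zero_le_one, hq4⟩
    have hval := hoval ε r ⟨hε0, hr0, hne⟩
    obtain ⟨κ₀, hκ₀mem, hκ₀lt⟩ :=
      Real.lt_sInf_add_pos
        (show ({κ | 0 ≤ κ ∧ Q4 ε r κ} : Set ℝ).Nonempty from ⟨1, zero_le_one, hq4⟩)
        (lt_min hε0 hr0)
    have hle : κ₀ ≤ o ε r := by
      rw [hval]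
      exact hκ₀lt.le
    exact hmono ε r κ₀ (o ε r) hε0.le hle hκ₀mem.2
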